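/- Fix reals λ > 0, μ_1 > 0, μ_2 > 0, and take N = 2, μ_0 = λ, μ_3 = 0. With the preemptive reach probability P(a,b,a',b') defined recursively by: P(a,b,a',b') = 1 if a = a' and b = b'; P(a,b,a',b') = 0 if a > a' or b > b' or a ≤ b; and otherwise P(a,b,a',b') = (μ_a/(μ_a+μ_b))·P(a+1,b,a',b') + (μ_b/(μ_a+μ_b))·P(a,b+1,a',b'), define ζ_0 = P(1,0,2,0)·μ_2/(μ_2+λ) and ζ_1 = P(1,0,2,1)·μ_2/(μ_2+μ_1). Then ζ_0/(ζ_0+ζ_1) = (μ_1+μ_2)/(λ+μ_1+μ_2) and ζ_1/(ζ_0+ζ_1) = λ/(λ+μ_1+μ_2). -/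

import Mathlib

/-- Preemptive reach probability `P(a, b, a', b')` from the paper's Lemma 2:
`P(a,b,a',b') = 1` if `a = a'` and `b = b'`; `P(a,b,a',b') = 0` if `a > a'` or `b > b'` or
`a ≤ b`; otherwise
`P(a,b,a',b') = (μ_a/(μ_a+μ_b))·P(a+1,b,a',b') + (μ_b/(μ_a+μ_b))·P(a,b+1,a',b')`. -/
noncomputable def reachP (μ : ℕ → ℝ) (a b a' b' : ℕ) : ℝ :=
  if a = a' ∧ b = b' then 1
  else if a > a' ∨ b > b' ∨ a ≤ b then 0
  else (μ a / (μ a + μ b)) * reachP μ (a + 1) b a' b'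
    + (μ b / (μ a + μ b)) * reachP μ a (b + 1) a' b'
termination_by (a' + b') - (a + b)
decreasing_by all_goals omega

/-- For `N = 2` preemptive servers with `μ 0 = λ > 0`, `μ 1, μ 2 > 0`, `μ 3 = 0`, and
`ζ_0 = P(1,0,2,0)·μ_2/(μ_2+λ)`, `ζ_1 = P(1,0,2,1)·μ_2/(μ_2+μ_1)`, one has
`ζ_0/(ζ_0+ζ_1) = (μ_1+μ_2)/(λ+μ_1+μ_2)` and `ζ_1/(ζ_0+ζ_1) = λ/(λ+μ_1+μ_2)`. -/
theorem psi_prob_two_servers (lam : ℝ) (hlam : 0 < lam) (μ : ℕ → ℝ) (hμ0 : μ 0 = lam)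
    (hμ1 : 0 < μ 1) (hμ2 : 0 < μ 2) (hμ3 : μ 3 = 0) (ζ0 ζ1 : ℝ)
    (hζ0 : ζ0 = reachP μ 1 0 2 0 * (μ 2 / (μ 2 + lam)))
    (hζ1 : ζ1 = reachP μ 1 0 2 1 * (μ 2 / (μ 2 + μ 1))) :
    ζ0 / (ζ0 + ζ1) = (μ 1 + μ 2) / (lam + μ 1 + μ 2)
    ∧ ζ1 / (ζ0 + ζ1) = lam / (lam + μ 1 + μ 2) := by
  have e1 : reachP μ 2 0 2 0 = 1 := by rw [reachP]; norm_num
  have e2 : reachP μ 1 1 2 0 = 0 := by rw [reachP]; norm_num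
  have h10 : reachP μ 1 0 2 0 = μ 1 / (μ 1 + lam) := by
    rw [reachP]; norm_num [e1, e2, hμ0]
  have e3 : reachP μ 3 0 2 1 = 0 := by rw [reachP]; norm_num
  have e4 : reachP μ 2 1 2 1 = 1 := by rw [reachP]; norm_num
  have e5 : reachP μ 2 0 2 1 = lam / (μ 2 + lam) := by
    rw [reachP]; norm_num [e3, e4, hμ0]
  have e6 : reachP μ 1 1 2 1 = 0 := by rw [reachP]; norm_num
  have h11 : reachP μ 1 0 2 1 = (μ 1 / (μ 1 + lam)) * (lam / (μ 2 + lam)) := by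
    rw [reachP]; norm_num [e5, e6, hμ0]
  have d1 : μ 1 + lam ≠ 0 := by positivity
  have d2 : μ 2 + lam ≠ 0 := by positivity
  have d3 : μ 2 + μ 1 ≠ 0 := by positivity
  have d4 : lam + μ 1 + μ 2 ≠ 0 := by positivity
  have hsum : ζ0 + ζ1 = μ 1 * μ 2 * (lam + μ 1 + μ 2) / ((μ 1 + lam) * (μ 2 + lam) * (μ 2 + μ 1)) := by
    rw [hζ0, hζ1, h10, h11]; field_simp; ring
  have hsne : ζ0 + ζ1 ≠ 0 := by
    rw [hsum]; positivity
  constructor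
  · rw [hsum, hζ0, h10]; field_simp; ring
  · rw [hsum, hζ1, h11]; field_simp
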